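/- Let Z = (Z_k)_{k≥0} be a nested family of normed spaces over K. The three cases (I), (II), (III) defining a strict expansion are mutually exclusive: no sequence (v_n)_{n≥1} in Z_0 can simultaneously satisfy two of the three cases (in particular, a sequence cannot have both a trivial strict expansion and a finite one, both a trivial and an infinite one, or both a finite and an infinite one). -/
import Mathlib


open Filter

section ExpansionDefs

variable (𝕜 : Type*) [RCLike 𝕜] {E : Type*} [AddCommGroup E] [Module 𝕜 E]

/-- The set `S ⊆ E`, equipped with the norm function `nrm`, is a normed space over `𝕜`. -/
def IsNormedSubspace (S : Set E) (nrm : E → ℝ) : Prop :=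
  (0 : E) ∈ S ∧ (∀ x ∈ S, ∀ y ∈ S, x + y ∈ S) ∧ (∀ c : 𝕜, ∀ x ∈ S, c • x ∈ S) ∧
    (∀ x ∈ S, 0 ≤ nrm x) ∧ (∀ x ∈ S, (nrm x = 0 ↔ x = 0)) ∧
    (∀ x ∈ S, ∀ y ∈ S, nrm (x + y) ≤ nrm x + nrm y) ∧
    ∀ c : 𝕜, ∀ x ∈ S, nrm (c • x) = ‖c‖ * nrm x

/-- `Z` together with the norms `nrm` is a nested family
`Z₀ ⊆ Z₁ ⊆ ⋯` of normed spaces over `𝕜` with continuous embeddings. -/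
def IsNestedFamily (Z : ℕ → Set E) (nrm : ℕ → E → ℝ) : Prop :=
  (∀ k, IsNormedSubspace 𝕜 (Z k) (nrm k)) ∧ (∀ k, Z k ⊆ Z (k + 1)) ∧
    ∀ k, ∃ C > 0, ∀ x ∈ Z k, nrm (k + 1) x ≤ C * nrm k x

/-- Every embedding `Z k ⊆ Z (k+1)` is compact: every bounded sequence in `Z k`
has a subsequence converging, in the norm of `Z (k+1)`, to an element of `Z (k+1)`. -/
def HasCompactEmbeddings {E : Type*} [AddCommGroup E] (Z : ℕ → Set E) (nrm : ℕ → E → ℝ) :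
    Prop :=
  ∀ (k : ℕ) (u : ℕ → E), (∀ n, u n ∈ Z k) → (∃ M, ∀ n, nrm k (u n) ≤ M) →
    ∃ ψ : ℕ → ℕ, StrictMono ψ ∧
      ∃ x ∈ Z (k + 1), Tendsto (fun n => nrm (k + 1) (u (ψ n) - x)) atTop (nhds 0)

/-- The partial sum `∑_{j=1}^m Γ_{j,n} w_j` (real coefficients acting through `𝕜`). -/
noncomputable def expPartialSum (w : ℕ → E) (Γ : ℕ → ℕ → ℝ) (m n : ℕ) : E :=
  ∑ j ∈ Finset.Icc 1 m, algebraMap ℝ 𝕜 (Γ j n) • w j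

/-- Case (I) of a strict expansion: the trivial expansion. -/
def StrictCaseI {E : Type*} [AddCommGroup E] (Z : ℕ → Set E) (v : ℕ → E) (c : E) : Prop :=
  c ∈ Z 0 ∧ ∀ n, v n = c

/-- Case (II) of a strict expansion: a finite expansion with `K0 ≥ 1` terms. -/
def StrictCaseII (Z : ℕ → Set E) (nrm : ℕ → E → ℝ) (v : ℕ → E) (c : E) (K0 : ℕ)
    (w : ℕ → E) (wn : ℕ → ℕ → E) (Γ : ℕ → ℕ → ℝ) : Prop :=
  1 ≤ K0 ∧ c ∈ Z 0 ∧
    (∀ k, 1 ≤ k → k ≤ K0 → w k ∈ Z k) ∧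
    (∀ k, 1 ≤ k → k ≤ K0 → ∀ n, wn k n ∈ Z (k - 1)) ∧
    (∀ k, 1 ≤ k → k ≤ K0 → ∀ n, 0 < Γ k n) ∧
    Tendsto (fun n => Γ 1 n) atTop (nhds 0) ∧
    (∀ k, 1 ≤ k → k < K0 → Tendsto (fun n => Γ (k + 1) n / Γ k n) atTop (nhds 0)) ∧
    (∀ k, 1 ≤ k → k ≤ K0 → Tendsto (fun n => nrm k (wn k n - w k)) atTop (nhds 0)) ∧
    (∀ k, 1 ≤ k → k ≤ K0 → ∀ n, nrm (k - 1) (wn k n) = 1) ∧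
    (∀ k, 1 ≤ k → k ≤ K0 → ∀ n,
      v n = c + expPartialSum 𝕜 w Γ (k - 1) n + algebraMap ℝ 𝕜 (Γ k n) • wn k n) ∧
    ∀ n, wn K0 n = w K0

/-- Case (III) of a strict expansion: an infinite expansion. -/
def StrictCaseIII (Z : ℕ → Set E) (nrm : ℕ → E → ℝ) (v : ℕ → E) (c : E)
    (w : ℕ → E) (wn : ℕ → ℕ → E) (Γ : ℕ → ℕ → ℝ) (Nk : ℕ → ℕ) : Prop :=
  c ∈ Z 0 ∧
    (∀ k, 1 ≤ k → w k ∈ Z k) ∧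
    (∀ k, 1 ≤ k → ∀ n, wn k n ∈ Z (k - 1)) ∧
    (∀ k, 1 ≤ k → ∀ n, 0 < Γ k n) ∧
    (∀ k, 1 ≤ k → 1 ≤ Nk k) ∧
    Tendsto (fun n => Γ 1 n) atTop (nhds 0) ∧
    (∀ k, 1 ≤ k → Tendsto (fun n => Γ (k + 1) n / Γ k n) atTop (nhds 0)) ∧
    (∀ k, 1 ≤ k → Tendsto (fun n => nrm k (wn k n - w k)) atTop (nhds 0)) ∧
    (∀ k, 1 ≤ k → ∀ n,
      v n = c + expPartialSum 𝕜 w Γ (k - 1) n + algebraMap ℝ 𝕜 (Γ k n) • wn k n) ∧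
    ∀ k, 1 ≤ k → ∀ n, Nk k ≤ n → nrm (k - 1) (wn k n) = 1

/-- The strict expansion `v_n ≈ c + ∑_{k ∈ N} Γ_{k,n} w_k` with explicit data:
the index set `N` is `∅` in case (I), `{1, …, K0}` in case (II) and `{k | k ≥ 1}`
in case (III). -/
def StrictExpansionWith (Z : ℕ → Set E) (nrm : ℕ → E → ℝ) (v : ℕ → E) (c : E) (N : Set ℕ)
    (w : ℕ → E) (wn : ℕ → ℕ → E) (Γ : ℕ → ℕ → ℝ) (Nk : ℕ → ℕ) : Prop :=
  (N = ∅ ∧ StrictCaseI Z v c) ∨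
    (∃ K0 : ℕ, N = Set.Icc 1 K0 ∧ StrictCaseII 𝕜 Z nrm v c K0 w wn Γ) ∨
    (N = {k : ℕ | 1 ≤ k} ∧ StrictCaseIII 𝕜 Z nrm v c w wn Γ Nk)

/-- `v` possesses a strict expansion in the nested family `(Z, nrm)`. -/
def HasStrictExpansion (Z : ℕ → Set E) (nrm : ℕ → E → ℝ) (v : ℕ → E) : Prop :=
  ∃ (c : E) (N : Set ℕ) (w : ℕ → E) (wn : ℕ → ℕ → E) (Γ : ℕ → ℕ → ℝ) (Nk : ℕ → ℕ),
    StrictExpansionWith 𝕜 Z nrm v c N w wn Γ Nk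

/-- Case (II) of a relaxed expansion: unit-norm conditions dropped, `w K0 ≠ 0` required. -/
def RelaxedCaseII (Z : ℕ → Set E) (nrm : ℕ → E → ℝ) (v : ℕ → E) (c : E) (K0 : ℕ)
    (w : ℕ → E) (wn : ℕ → ℕ → E) (Γ : ℕ → ℕ → ℝ) : Prop :=
  1 ≤ K0 ∧ c ∈ Z 0 ∧
    (∀ k, 1 ≤ k → k ≤ K0 → w k ∈ Z k) ∧
    (∀ k, 1 ≤ k → k ≤ K0 → ∀ n, wn k n ∈ Z (k - 1)) ∧
    (∀ k, 1 ≤ k → k ≤ K0 → ∀ n, 0 < Γ k n) ∧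
    Tendsto (fun n => Γ 1 n) atTop (nhds 0) ∧
    (∀ k, 1 ≤ k → k < K0 → Tendsto (fun n => Γ (k + 1) n / Γ k n) atTop (nhds 0)) ∧
    (∀ k, 1 ≤ k → k ≤ K0 → Tendsto (fun n => nrm k (wn k n - w k)) atTop (nhds 0)) ∧
    (∀ k, 1 ≤ k → k ≤ K0 → ∀ n,
      v n = c + expPartialSum 𝕜 w Γ (k - 1) n + algebraMap ℝ 𝕜 (Γ k n) • wn k n) ∧
    (∀ n, wn K0 n = w K0) ∧ w K0 ≠ 0

/-- Case (III) of a relaxed expansion: unit-norm conditions dropped. -/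
def RelaxedCaseIII (Z : ℕ → Set E) (nrm : ℕ → E → ℝ) (v : ℕ → E) (c : E)
    (w : ℕ → E) (wn : ℕ → ℕ → E) (Γ : ℕ → ℕ → ℝ) : Prop :=
  c ∈ Z 0 ∧
    (∀ k, 1 ≤ k → w k ∈ Z k) ∧
    (∀ k, 1 ≤ k → ∀ n, wn k n ∈ Z (k - 1)) ∧
    (∀ k, 1 ≤ k → ∀ n, 0 < Γ k n) ∧
    Tendsto (fun n => Γ 1 n) atTop (nhds 0) ∧
    (∀ k, 1 ≤ k → Tendsto (fun n => Γ (k + 1) n / Γ k n) atTop (nhds 0)) ∧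
    (∀ k, 1 ≤ k → Tendsto (fun n => nrm k (wn k n - w k)) atTop (nhds 0)) ∧
    ∀ k, 1 ≤ k → ∀ n,
      v n = c + expPartialSum 𝕜 w Γ (k - 1) n + algebraMap ℝ 𝕜 (Γ k n) • wn k n

/-- A relaxed expansion `v_n ≈ c + ∑_{k ∈ N} Γ_{k,n} w_k` with explicit data. -/
def RelaxedExpansionWith (Z : ℕ → Set E) (nrm : ℕ → E → ℝ) (v : ℕ → E) (c : E) (N : Set ℕ)
    (w : ℕ → E) (wn : ℕ → ℕ → E) (Γ : ℕ → ℕ → ℝ) : Prop :=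
  (N = ∅ ∧ StrictCaseI Z v c) ∨
    (∃ K0 : ℕ, N = Set.Icc 1 K0 ∧ RelaxedCaseII 𝕜 Z nrm v c K0 w wn Γ) ∨
    (N = {k : ℕ | 1 ≤ k} ∧ RelaxedCaseIII 𝕜 Z nrm v c w wn Γ)

/-- `v` has a unitary expansion with limit `c`: a relaxed expansion in which
`‖w_k‖_{Z_k} = 1` for every `k ∈ N`. -/
def UnitaryExpansionFrom (Z : ℕ → Set E) (nrm : ℕ → E → ℝ) (v : ℕ → E) (c : E) : Prop :=
  ∃ (N : Set ℕ) (w : ℕ → E) (wn : ℕ → ℕ → E) (Γ : ℕ → ℕ → ℝ),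
    RelaxedExpansionWith 𝕜 Z nrm v c N w wn Γ ∧ ∀ k ∈ N, nrm k (w k) = 1

/-- `v` has a degenerate expansion with limit `c`: an infinite relaxed expansion
in which either all `w_k = 0`, or `‖w_k‖_{Z_k} = 1` for `1 ≤ k ≤ N0` and `w_k = 0`
for `k > N0`. -/
def DegenerateExpansionFrom (Z : ℕ → Set E) (nrm : ℕ → E → ℝ) (v : ℕ → E) (c : E) : Prop :=
  ∃ (w : ℕ → E) (wn : ℕ → ℕ → E) (Γ : ℕ → ℕ → ℝ),
    RelaxedCaseIII 𝕜 Z nrm v c w wn Γ ∧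
      ((∀ k, 1 ≤ k → w k = 0) ∨
        ∃ N0 : ℕ, 1 ≤ N0 ∧ (∀ k, 1 ≤ k → k ≤ N0 → nrm k (w k) = 1) ∧ ∀ k, N0 < k → w k = 0)

end ExpansionDefs

section Helpers

variable {𝕜 : Type*} [RCLike 𝕜] {E : Type*} [AddCommGroup E] [Module 𝕜 E]

lemma smul_cancelK {a : 𝕜} (ha : a ≠ 0) {x y : E} (h : a • x = a • y) : x = y := by
  rw [← inv_smul_smul₀ ha x, h, inv_smul_smul₀ ha]

lemma algebraMap_ne_zeroK {r : ℝ} (hr : 0 < r) : (algebraMap ℝ 𝕜 r) ≠ 0 := by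
  intro h
  have h2 := congrArg norm h
  rw [norm_algebraMap', norm_zero] at h2
  rw [Real.norm_eq_abs, abs_of_pos hr] at h2
  exact hr.ne' h2

variable {S : Set E} {nr : E → ℝ}

lemma ns_sub_mem (h : IsNormedSubspace 𝕜 S nr) {x y : E} (hx : x ∈ S) (hy : y ∈ S) :
    x - y ∈ S := by
  have := h.2.1 x hx ((-1 : 𝕜) • y) (h.2.2.1 (-1 : 𝕜) y hy)
  simpa [sub_eq_add_neg] using this

lemma ns_nrm_smul (h : IsNormedSubspace 𝕜 S nr) (r : ℝ) {x : E} (hx : x ∈ S) :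
    nr (algebraMap ℝ 𝕜 r • x) = |r| * nr x := by
  rw [h.2.2.2.2.2.2 _ x hx, norm_algebraMap', Real.norm_eq_abs]

lemma ns_nrm_zero (h : IsNormedSubspace 𝕜 S nr) : nr 0 = 0 := (h.2.2.2.2.1 0 h.1).mpr rfl

lemma ns_nrm_sub_comm (h : IsNormedSubspace 𝕜 S nr) {x y : E} (hx : x ∈ S) (hy : y ∈ S) :
    nr (x - y) = nr (y - x) := by
  have t := h.2.2.2.2.2.2 (-1 : 𝕜) (x - y) (ns_sub_mem h hx hy)
  rw [neg_one_smul, neg_sub] at t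
  simpa using t.symm

lemma ns_eq_of_tendsto (h : IsNormedSubspace 𝕜 S nr) {a : ℕ → E} (ha : ∀ n, a n ∈ S)
    {x y : E} (hx : x ∈ S) (hy : y ∈ S)
    (h1 : Tendsto (fun n => nr (a n - x)) atTop (nhds 0))
    (h2 : Tendsto (fun n => nr (a n - y)) atTop (nhds 0)) : x = y := by
  have hxy : x - y ∈ S := ns_sub_mem h hx hy
  have hb : ∀ n, nr (x - y) ≤ nr (a n - x) + nr (a n - y) := by
    intro n
    have t := h.2.2.2.2.2.1 (x - a n) (ns_sub_mem h hx (ha n)) (a n - y)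
      (ns_sub_mem h (ha n) hy)
    rw [ns_nrm_sub_comm h hx (ha n)] at t
    rw [show x - y = x - a n + (a n - y) by abel]
    exact t
  have hle := ge_of_tendsto' (h1.add h2) hb
  have h0 : nr (x - y) = 0 := le_antisymm (by simpa using hle) (h.2.2.2.1 _ hxy)
  exact sub_eq_zero.mp ((h.2.2.2.2.1 _ hxy).mp h0)

lemma expPartialSum_succ (𝕜 : Type*) [RCLike 𝕜] {E : Type*} [AddCommGroup E] [Module 𝕜 E]
    (w : ℕ → E) (Γ : ℕ → ℕ → ℝ) (k n : ℕ) (hk : 1 ≤ k) :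
    expPartialSum 𝕜 w Γ k n
      = expPartialSum 𝕜 w Γ (k - 1) n + algebraMap ℝ 𝕜 (Γ k n) • w k := by
  obtain ⟨m, rfl⟩ : ∃ m, k = m + 1 := ⟨k - 1, by omega⟩
  simp only [expPartialSum, Nat.add_sub_cancel]
  exact Finset.sum_Icc_succ_top (by omega) _

end Helpers

section Absurd

variable {𝕜 : Type*} [RCLike 𝕜] {E : Type*} [AddCommGroup E] [Module 𝕜 E]

lemma absurd_I_II {Z : ℕ → Set E} {nrm : ℕ → E → ℝ} (hfam : IsNestedFamily 𝕜 Z nrm)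
    {v : ℕ → E} {c0 c : E} {K0 : ℕ} {w : ℕ → E} {wn : ℕ → ℕ → E} {Γ : ℕ → ℕ → ℝ}
    (hI : StrictCaseI Z v c0) (hII : StrictCaseII 𝕜 Z nrm v c K0 w wn Γ) : False := by
  obtain ⟨hK0, hc, hw, hwn, hpos, hΓ1, hrat, htend, hunit, heq, hlast⟩ := hII
  have hn1 : ∀ n, nrm 0 (v n - c) = Γ 1 n := by
    intro n
    have e := heq 1 le_rfl hK0 n
    simp only [expPartialSum, Nat.sub_self, Finset.Icc_eq_empty_of_lt Nat.zero_lt_one,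
      Finset.sum_empty, add_zero] at e
    have : v n - c = algebraMap ℝ 𝕜 (Γ 1 n) • wn 1 n := by rw [e]; abel
    rw [this, ns_nrm_smul (hfam.1 0) _ (hwn 1 le_rfl hK0 n), hunit 1 le_rfl hK0 n,
      abs_of_pos (hpos 1 le_rfl hK0 n), mul_one]
  have hconst : Tendsto (fun _ : ℕ => nrm 0 (c0 - c)) atTop (nhds 0) :=
    hΓ1.congr fun n => by rw [← hn1 n, hI.2 n]
  have h0 : nrm 0 (c0 - c) = 0 := tendsto_nhds_unique tendsto_const_nhds hconst
  have : Γ 1 0 = 0 := by rw [← hn1 0, hI.2 0, h0]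
  exact (hpos 1 le_rfl hK0 0).ne' this

lemma absurd_I_III {Z : ℕ → Set E} {nrm : ℕ → E → ℝ} (hfam : IsNestedFamily 𝕜 Z nrm)
    {v : ℕ → E} {c0 c : E} {w : ℕ → E} {wn : ℕ → ℕ → E} {Γ : ℕ → ℕ → ℝ} {Nk : ℕ → ℕ}
    (hI : StrictCaseI Z v c0) (hIII : StrictCaseIII 𝕜 Z nrm v c w wn Γ Nk) : False := by
  obtain ⟨hc, hw, hwn, hpos, hNk, hΓ1, hrat, htend, heq, hunit⟩ := hIII
  have hn1 : ∀ n, Nk 1 ≤ n → nrm 0 (v n - c) = Γ 1 n := by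
    intro n hn
    have e := heq 1 le_rfl n
    simp only [expPartialSum, Nat.sub_self, Finset.Icc_eq_empty_of_lt Nat.zero_lt_one,
      Finset.sum_empty, add_zero] at e
    have : v n - c = algebraMap ℝ 𝕜 (Γ 1 n) • wn 1 n := by rw [e]; abel
    rw [this, ns_nrm_smul (hfam.1 0) _ (hwn 1 le_rfl n), hunit 1 le_rfl n hn,
      abs_of_pos (hpos 1 le_rfl n), mul_one]
  have hconst : Tendsto (fun _ : ℕ => nrm 0 (c0 - c)) atTop (nhds 0) := by
    refine hΓ1.congr' ?_
    filter_upwards [eventually_ge_atTop (Nk 1)] with n hn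
    rw [← hn1 n hn, hI.2 n]
  have h0 : nrm 0 (c0 - c) = 0 := tendsto_nhds_unique tendsto_const_nhds hconst
  have : Γ 1 (Nk 1) = 0 := by rw [← hn1 (Nk 1) le_rfl, hI.2 (Nk 1), h0]
  exact (hpos 1 le_rfl (Nk 1)).ne' this

lemma absurd_II_III {Z : ℕ → Set E} {nrm : ℕ → E → ℝ} (hfam : IsNestedFamily 𝕜 Z nrm)
    {v : ℕ → E} (hv : ∀ n, v n ∈ Z 0)
    {c : E} {K0 : ℕ} {w : ℕ → E} {wn : ℕ → ℕ → E} {Γ : ℕ → ℕ → ℝ}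
    {c' : E} {w' : ℕ → E} {wn' : ℕ → ℕ → E} {Γ' : ℕ → ℕ → ℝ} {Nk : ℕ → ℕ}
    (hII : StrictCaseII 𝕜 Z nrm v c K0 w wn Γ)
    (hIII : StrictCaseIII 𝕜 Z nrm v c' w' wn' Γ' Nk) : False := by
  obtain ⟨hK0, hc, hw, hwn, hpos, hΓ1, hrat, htend, hunit, heq, hlast⟩ := hII
  obtain ⟨hc', hw', hwn', hpos', hNk, hΓ1', hrat', htend', heq', hunit'⟩ := hIII
  have hsub : ∀ k, 1 ≤ k → Z (k - 1) ⊆ Z k := by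
    intro k hk
    have h := hfam.2.1 (k - 1)
    rwa [Nat.sub_add_cancel hk] at h
  -- norms of remainders
  have hn1 : ∀ n, v n - c = algebraMap ℝ 𝕜 (Γ 1 n) • wn 1 n := by
    intro n
    have e := heq 1 le_rfl hK0 n
    simp only [expPartialSum, Nat.sub_self, Finset.Icc_eq_empty_of_lt Nat.zero_lt_one,
      Finset.sum_empty, add_zero] at e
    rw [e]; abel
  have hn1' : ∀ n, v n - c' = algebraMap ℝ 𝕜 (Γ' 1 n) • wn' 1 n := by
    intro n
    have e := heq' 1 le_rfl n
    simp only [expPartialSum, Nat.sub_self, Finset.Icc_eq_empty_of_lt Nat.zero_lt_one,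
      Finset.sum_empty, add_zero] at e
    rw [e]; abel
  -- c = c'
  have hcc : c = c' := by
    refine ns_eq_of_tendsto (hfam.1 0) hv hc hc' ?_ ?_
    · refine hΓ1.congr fun n => ?_
      rw [hn1 n, ns_nrm_smul (hfam.1 0) _ (hwn 1 le_rfl hK0 n), hunit 1 le_rfl hK0 n,
        abs_of_pos (hpos 1 le_rfl hK0 n), mul_one]
    · refine hΓ1'.congr' ?_
      filter_upwards [eventually_ge_atTop (Nk 1)] with n hn
      rw [hn1' n, ns_nrm_smul (hfam.1 0) _ (hwn' 1 le_rfl n), hunit' 1 le_rfl n hn,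
        abs_of_pos (hpos' 1 le_rfl n), mul_one]
  subst hcc
  -- step identities
  have hstepII : ∀ k, 1 ≤ k → k + 1 ≤ K0 → ∀ n,
      algebraMap ℝ 𝕜 (Γ k n) • wn k n
        = algebraMap ℝ 𝕜 (Γ k n) • w k + algebraMap ℝ 𝕜 (Γ (k + 1) n) • wn (k + 1) n := by
    intro k hk hk1 n
    have e1 := heq k hk (by omega) n
    have e2 := heq (k + 1) (by omega) hk1 n
    rw [Nat.add_sub_cancel, expPartialSum_succ 𝕜 w Γ k n hk] at e2
    have h := e1.symm.trans e2
    calc algebraMap ℝ 𝕜 (Γ k n) • wn k n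
        = c + expPartialSum 𝕜 w Γ (k - 1) n + algebraMap ℝ 𝕜 (Γ k n) • wn k n
          - (c + expPartialSum 𝕜 w Γ (k - 1) n) := by abel
      _ = c + (expPartialSum 𝕜 w Γ (k - 1) n + algebraMap ℝ 𝕜 (Γ k n) • w k)
          + algebraMap ℝ 𝕜 (Γ (k + 1) n) • wn (k + 1) n
          - (c + expPartialSum 𝕜 w Γ (k - 1) n) := by rw [h]
      _ = _ := by abel
  have hstepIII : ∀ k, 1 ≤ k → ∀ n,
      algebraMap ℝ 𝕜 (Γ' k n) • wn' k n
        = algebraMap ℝ 𝕜 (Γ' k n) • w' k + algebraMap ℝ 𝕜 (Γ' (k + 1) n) • wn' (k + 1) n := by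
    intro k hk n
    have e1 := heq' k hk n
    have e2 := heq' (k + 1) (by omega) n
    rw [Nat.add_sub_cancel, expPartialSum_succ 𝕜 w' Γ' k n hk] at e2
    have h := e1.symm.trans e2
    calc algebraMap ℝ 𝕜 (Γ' k n) • wn' k n
        = c + expPartialSum 𝕜 w' Γ' (k - 1) n + algebraMap ℝ 𝕜 (Γ' k n) • wn' k n
          - (c + expPartialSum 𝕜 w' Γ' (k - 1) n) := by abel
      _ = c + (expPartialSum 𝕜 w' Γ' (k - 1) n + algebraMap ℝ 𝕜 (Γ' k n) • w' k)
          + algebraMap ℝ 𝕜 (Γ' (k + 1) n) • wn' (k + 1) n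
          - (c + expPartialSum 𝕜 w' Γ' (k - 1) n) := by rw [h]
      _ = _ := by abel
  -- derived facts from the matching of level-k remainders
  have derived : ∀ k, 1 ≤ k → k ≤ K0 →
      (∀ᶠ n in atTop,
        algebraMap ℝ 𝕜 (Γ k n) • wn k n = algebraMap ℝ 𝕜 (Γ' k n) • wn' k n) →
      (∀ᶠ n in atTop, Γ k n = Γ' k n) ∧ (∀ᶠ n in atTop, wn k n = wn' k n) ∧ w k = w' k := by
    intro k hk hkK0 hev
    have hΓeq : ∀ᶠ n in atTop, Γ k n = Γ' k n := by
      filter_upwards [hev, eventually_ge_atTop (Nk k)] with n hn hNn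
      have h1 : nrm (k - 1) (algebraMap ℝ 𝕜 (Γ k n) • wn k n) = Γ k n := by
        rw [ns_nrm_smul (hfam.1 (k - 1)) _ (hwn k hk hkK0 n), hunit k hk hkK0 n,
          abs_of_pos (hpos k hk hkK0 n), mul_one]
      have h2 : nrm (k - 1) (algebraMap ℝ 𝕜 (Γ' k n) • wn' k n) = Γ' k n := by
        rw [ns_nrm_smul (hfam.1 (k - 1)) _ (hwn' k hk n), hunit' k hk n hNn,
          abs_of_pos (hpos' k hk n), mul_one]
      rw [← h1, ← h2, hn]
    have hwneq : ∀ᶠ n in atTop, wn k n = wn' k n := by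
      filter_upwards [hev, hΓeq] with n hn hΓn
      refine smul_cancelK (algebraMap_ne_zeroK (𝕜 := 𝕜) (hpos' k hk n)) ?_
      rw [← hΓn] at hn ⊢
      exact hn
    refine ⟨hΓeq, hwneq, ?_⟩
    refine ns_eq_of_tendsto (hfam.1 k) (fun n => hsub k hk (hwn k hk hkK0 n))
      (hw k hk hkK0) (hw' k hk) (htend k hk hkK0) ?_
    refine (htend' k hk).congr' ?_
    filter_upwards [hwneq] with n hn
    rw [hn]
  -- the main induction
  have key : ∀ k, 1 ≤ k → k ≤ K0 →
      ∀ᶠ n in atTop,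
        algebraMap ℝ 𝕜 (Γ k n) • wn k n = algebraMap ℝ 𝕜 (Γ' k n) • wn' k n := by
    intro k hk
    induction k, hk using Nat.le_induction with
    | base =>
      intro _
      filter_upwards with n
      have e1 := hn1 n
      have e2 := hn1' n
      rw [← e1, ← e2]
    | succ k hk ih =>
      intro hk1K0
      have hkK0 : k ≤ K0 := by omega
      have hev := ih hkK0
      obtain ⟨hΓeq, hwneq, hweq⟩ := derived k hk hkK0 hev
      filter_upwards [hev, hΓeq] with n hn hΓn
      calc algebraMap ℝ 𝕜 (Γ (k + 1) n) • wn (k + 1) n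
          = algebraMap ℝ 𝕜 (Γ k n) • wn k n - algebraMap ℝ 𝕜 (Γ k n) • w k := by
            rw [hstepII k hk hk1K0 n]; abel
        _ = algebraMap ℝ 𝕜 (Γ' k n) • wn' k n - algebraMap ℝ 𝕜 (Γ' k n) • w' k := by
            rw [hn, hΓn, hweq]
        _ = algebraMap ℝ 𝕜 (Γ' (k + 1) n) • wn' (k + 1) n := by
            rw [hstepIII k hk n]; abel
  -- final contradiction at level K0 + 1
  obtain ⟨hΓK, hwnK, hwK⟩ := derived K0 hK0 le_rfl (key K0 hK0 le_rfl)
  obtain ⟨n, hn1K, hn2K⟩ := (hwnK.and (eventually_ge_atTop (Nk (K0 + 1)))).exists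
  have h0 : wn' K0 n = w' K0 := by rw [← hn1K, hlast n, hwK]
  have s2 := hstepIII K0 hK0 n
  rw [h0] at s2
  have hz : algebraMap ℝ 𝕜 (Γ' (K0 + 1) n) • wn' (K0 + 1) n = 0 := (left_eq_add.mp s2)
  have hz0 : wn' (K0 + 1) n = 0 := by
    refine smul_cancelK (algebraMap_ne_zeroK (𝕜 := 𝕜) (hpos' (K0 + 1) (by omega) n)) ?_
    rw [hz, smul_zero]
  have hu := hunit' (K0 + 1) (by omega) n hn2K
  rw [Nat.add_sub_cancel, hz0] at hu
  exact one_ne_zero (hu.symm.trans (ns_nrm_zero (hfam.1 K0)))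

end Absurd

/-- the three cases (I), (II), (III) of a strict expansion are mutually
exclusive. -/
theorem strict_expansion_cases_mutually_exclusive
    (𝕜 : Type*) [RCLike 𝕜] {E : Type*} [AddCommGroup E] [Module 𝕜 E]
    (Z : ℕ → Set E) (nrm : ℕ → E → ℝ) (hfam : IsNestedFamily 𝕜 Z nrm)
    (v : ℕ → E) (hv : ∀ n, v n ∈ Z 0) :
    (¬ ((∃ c : E, StrictCaseI Z v c) ∧
        ∃ (c : E) (K0 : ℕ) (w : ℕ → E) (wn : ℕ → ℕ → E) (Γ : ℕ → ℕ → ℝ),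
          StrictCaseII 𝕜 Z nrm v c K0 w wn Γ)) ∧
    (¬ ((∃ c : E, StrictCaseI Z v c) ∧
        ∃ (c : E) (w : ℕ → E) (wn : ℕ → ℕ → E) (Γ : ℕ → ℕ → ℝ) (Nk : ℕ → ℕ),
          StrictCaseIII 𝕜 Z nrm v c w wn Γ Nk)) ∧
    ¬ ((∃ (c : E) (K0 : ℕ) (w : ℕ → E) (wn : ℕ → ℕ → E) (Γ : ℕ → ℕ → ℝ),
          StrictCaseII 𝕜 Z nrm v c K0 w wn Γ) ∧
        ∃ (c : E) (w : ℕ → E) (wn : ℕ → ℕ → E) (Γ : ℕ → ℕ → ℝ) (Nk : ℕ → ℕ),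
          StrictCaseIII 𝕜 Z nrm v c w wn Γ Nk) := by
  refine ⟨?_, ?_, ?_⟩
  · rintro ⟨⟨c0, hI⟩, ⟨c, K0, w, wn, Γ, hII⟩⟩
    exact absurd_I_II hfam hI hII
  · rintro ⟨⟨c0, hI⟩, ⟨c, w, wn, Γ, Nk, hIII⟩⟩
    exact absurd_I_III hfam hI hIII
  · rintro ⟨⟨c, K0, w, wn, Γ, hII⟩, ⟨c', w', wn', Γ', Nk, hIII⟩⟩
    exact absurd_II_III hfam hv hII hIII
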